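/- For positive integers k, l, p and nonnegative integers m, n: z_k z_p^m * z_l z_p^n = Σ_{i=1}^{m} z_k (z_p^i z_l + z_p^{i-1} z_{p+l}) (z_p^{m-i} * z_p^n) + Σ_{i=1}^{n} z_l (z_p^i z_k + z_p^{i-1} z_{p+k}) (z_p^{n-i} * z_p^m) + (z_k z_l + z_l z_k + z_{k+l}) (z_p^m * z_p^n). -/
import Mathlib


open MonoidAlgebra Finset

abbrev H : Type := MonoidAlgebra ℚ (FreeMonoid ℕ+)

noncomputable def word (w : List ℕ+) : H := MonoidAlgebra.single (FreeMonoid.ofList w) 1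

noncomputable def z (k : ℕ+) : H := word [k]

noncomputable def st : List ℕ+ → List ℕ+ → H
  | [], w => word w
  | k :: w1, [] => word (k :: w1)
  | k :: w1, l :: w2 =>
      z k * st w1 (l :: w2) + z l * st (k :: w1) w2 + z (k + l) * st w1 w2
termination_by a b => a.length + b.length
decreasing_by all_goals (simp; try omega)

lemma word_cons (a : ℕ+) (w : List ℕ+) : word (a :: w) = z a * word w := by
  simp [word, z, MonoidAlgebra.single_mul_single]

lemma st_nil_left (w : List ℕ+) : st [] w = word w := by simp [st]

lemma st_nil_right (w : List ℕ+) : st w [] = word w := by cases w <;> simp [st]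

lemma st_cons (k l : ℕ+) (w1 w2 : List ℕ+) : st (k::w1) (l::w2) =
    z k * st w1 (l :: w2) + z l * st (k :: w1) w2 + z (k + l) * st w1 w2 := by
  rw [st]

lemma st_comm (w1 w2 : List ℕ+) : st w1 w2 = st w2 w1 := by
  suffices h : ∀ N (w1 w2 : List ℕ+), w1.length + w2.length = N → st w1 w2 = st w2 w1 from
    h _ w1 w2 rfl
  intro N
  induction N using Nat.strong_induction_on with
  | _ N ih =>
    intro w1 w2 hn
    match w1, w2 with
    | [], w2 => rw [st_nil_left, st_nil_right]
    | k :: w1, [] => rw [st_nil_left, st_nil_right]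
    | k :: w1, l :: w2 =>
      rw [st_cons, st_cons]
      rw [ih (w1.length + (l::w2).length) (by simp only [← hn, List.length_cons]; omega) w1 (l::w2) rfl,
        ih ((k::w1).length + w2.length) (by simp only [← hn, List.length_cons]; omega) (k::w1) w2 rfl,
        ih (w1.length + w2.length) (by simp only [← hn, List.length_cons]; omega) w1 w2 rfl,
        add_comm k l]
      abel

lemma lemB (p l : ℕ+) (n : ℕ) : ∀ m : ℕ,
    st (List.replicate m p) (l :: List.replicate n p) =
      (∑ i ∈ Finset.Icc 1 m,
        (word (List.replicate i p) * z l + word (List.replicate (i - 1) p) * z (p + l))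
          * st (List.replicate (m - i) p) (List.replicate n p))
      + z l * st (List.replicate m p) (List.replicate n p) := by
  intro m
  induction m with
  | zero => simp [st_nil_left, word_cons]
  | succ m ih =>
    rw [List.replicate_succ, st_cons, ih, ← List.replicate_succ]
    rw [← Finset.Ico_add_one_right_eq_Icc, Finset.sum_Ico_eq_sum_range,
      ← Finset.Ico_add_one_right_eq_Icc, Finset.sum_Ico_eq_sum_range]
    simp only [Nat.add_sub_cancel, Nat.succ_sub_one]
    rw [Finset.sum_range_succ']
    have key : ∀ i ∈ Finset.range m,
        (word (List.replicate (1 + (i+1)) p) * z l +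
          word (List.replicate (1 + (i+1) - 1) p) * z (p + l)) *
          st (List.replicate (m + 1 - (1 + (i+1))) p) (List.replicate n p)
        = z p * ((word (List.replicate (1 + i) p) * z l +
          word (List.replicate (1 + i - 1) p) * z (p + l)) *
          st (List.replicate (m - (1 + i)) p) (List.replicate n p)) := by
      intro i _
      have h1 : 1 + (i+1) = (1 + i) + 1 := by omega
      have h2 : 1 + (i+1) - 1 = (1 + i - 1) + 1 := by omega
      have h3 : m + 1 - (1 + i + 1) = m - (1 + i) := by omega
      rw [h2, h1, h3, List.replicate_succ, List.replicate_succ, word_cons, word_cons]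
      noncomm_ring
    rw [Finset.sum_congr rfl key, ← Finset.mul_sum]
    have hz : word (List.replicate 1 p) = z p := rfl
    have h0 : word (List.replicate 0 p) = 1 := rfl
    simp only [Nat.add_zero, Nat.add_sub_cancel, Nat.sub_self, hz, h0]
    noncomm_ring

lemma lemC (p k : ℕ+) (m n : ℕ) :
    st (k :: List.replicate m p) (List.replicate n p) =
      (∑ i ∈ Finset.Icc 1 n,
        (word (List.replicate i p) * z k + word (List.replicate (i - 1) p) * z (p + k))
          * st (List.replicate (n - i) p) (List.replicate m p))
      + z k * st (List.replicate m p) (List.replicate n p) := by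
  rw [st_comm, lemB p k m n, st_comm (List.replicate n p)]

theorem st_one_one (k l p : ℕ+) (m n : ℕ) :
    st (k :: List.replicate m p) (l :: List.replicate n p) =
      (∑ i ∈ Finset.Icc 1 m,
        z k * (word (List.replicate i p) * z l + word (List.replicate (i - 1) p) * z (p + l))
          * st (List.replicate (m - i) p) (List.replicate n p))
      + (∑ i ∈ Finset.Icc 1 n,
        z l * (word (List.replicate i p) * z k + word (List.replicate (i - 1) p) * z (p + k))
          * st (List.replicate (n - i) p) (List.replicate m p))
      + (z k * z l + z l * z k + z (k + l)) * st (List.replicate m p) (List.replicate n p) := by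
  rw [st_cons, lemB p l n m, lemC p k m n, mul_add, mul_add, Finset.mul_sum, Finset.mul_sum]
  simp only [← mul_assoc]
  noncomm_ring
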